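/- The SCAD thresholding rule θ̂(z) minimizes θ ↦ (1/2)(z-θ)² + p_λ(|θ|) over ℝ, where p_λ is the SCAD penalty with parameter a > 2. -/

import Mathlib

/-- The SCAD penalty of Fan (1997). -/
noncomputable def scadPenalty (a lam θ : ℝ) : ℝ :=
  if θ ≤ lam then lam * θ
  else if θ ≤ a * lam then -(θ ^ 2 - 2 * a * lam * θ + lam ^ 2) / (2 * (a - 1))
  else (a + 1) * lam ^ 2 / 2

/-- The SCAD thresholding rule with parameters `a > 2` and `λ > 0`. -/
noncomputable def scadThreshold (a lam z : ℝ) : ℝ :=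
  if |z| ≤ 2 * lam then Real.sign z * max (|z| - lam) 0
  else if |z| ≤ a * lam then ((a - 1) * z - Real.sign z * a * lam) / (a - 2)
  else z

lemma pen_ge (a lam z θ c : ℝ) (hθ : 0 ≤ θ)
    (h1 : θ ≤ lam → c ≤ 1/2*(z-θ)^2 + lam*θ)
    (h2 : lam < θ → θ ≤ a*lam → c ≤ 1/2*(z-θ)^2 + -(θ^2 - 2*a*lam*θ + lam^2)/(2*(a-1)))
    (h3 : a*lam < θ → c ≤ 1/2*(z-θ)^2 + (a+1)*lam^2/2) :
    c ≤ 1/2*(z-θ)^2 + scadPenalty a lam θ := by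
  unfold scadPenalty
  split_ifs with hc1 hc2
  · exact h1 hc1
  · exact h2 (not_le.1 hc1) hc2
  · exact h3 (not_le.1 hc2)

set_option maxHeartbeats 1000000 in
lemma key (a lam z : ℝ) (ha : 2 < a) (hlam : 0 < lam) (hz : 0 ≤ z) (θ : ℝ) (hθ : 0 ≤ θ) :
    1/2*(z - scadThreshold a lam z)^2 + scadPenalty a lam (scadThreshold a lam z) ≤
      1/2*(z-θ)^2 + scadPenalty a lam θ := by
  have ha1 : (0:ℝ) < a - 1 := by linarith
  have ha2 : (0:ℝ) < a - 2 := by linarith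
  have habs : |z| = z := abs_of_nonneg hz
  rcases le_or_gt z lam with hz1 | hz1
  · -- T = 0
    have hT : scadThreshold a lam z = 0 := by
      unfold scadThreshold
      rw [habs, if_pos (by linarith), max_eq_right (by linarith), mul_zero]
    rw [hT]
    have hp0 : scadPenalty a lam 0 = 0 := by
      unfold scadPenalty; rw [if_pos hlam.le]; ring
    rw [hp0]
    apply pen_ge a lam z θ _ hθ
    · intro h
      nlinarith [mul_nonneg hθ (by linarith : (0:ℝ) ≤ θ + 2*(lam - z))]
    · intro h h'
      have heq : 1/2*(z-θ)^2 + -(θ^2 - 2*a*lam*θ + lam^2)/(2*(a-1))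
          = 1/2*(z-0)^2 + 0 + ((a-2)*θ^2 + 2*(a*lam - (a-1)*z)*θ - lam^2)/(2*(a-1)) := by
        field_simp; ring
      have hN : (0:ℝ) ≤ (a-2)*θ^2 + 2*(a*lam - (a-1)*z)*θ - lam^2 := by
        nlinarith [mul_nonneg (mul_nonneg ha1.le (by linarith : (0:ℝ) ≤ θ)) (by linarith : (0:ℝ) ≤ lam - z),
          mul_nonneg hlam.le (by linarith : (0:ℝ) ≤ θ - lam),
          mul_nonneg ha2.le (sq_nonneg θ)]
      have hDiv := div_nonneg hN (by positivity : (0:ℝ) ≤ 2*(a-1))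
      linarith
    · intro h
      nlinarith [sq_nonneg (z-θ), mul_nonneg (by linarith : (0:ℝ) ≤ lam - z) (by linarith : (0:ℝ) ≤ lam + z), sq_nonneg lam]
  · rcases le_or_gt z (2*lam) with hz2 | hz2
    · -- T = z - lam
      have hT : scadThreshold a lam z = z - lam := by
        unfold scadThreshold
        rw [habs, if_pos hz2, Real.sign_of_pos (by linarith), max_eq_left (by linarith)]
        ring
      rw [hT]
      have hp : scadPenalty a lam (z - lam) = lam * (z - lam) := by
        unfold scadPenalty; rw [if_pos (by linarith)]
      rw [hp]
      apply pen_ge a lam z θ _ hθ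
      · intro h
        nlinarith [sq_nonneg (θ - z + lam)]
      · intro h h'
        have heq : 1/2*(z-θ)^2 + -(θ^2 - 2*a*lam*θ + lam^2)/(2*(a-1))
            = 1/2*(z-(z-lam))^2 + lam*(z-lam)
              + ((a-2)*(θ-lam)^2 + 2*(a-1)*(2*lam-z)*(θ-lam) + (a-1)*(z-2*lam)^2)/(2*(a-1)) := by
          field_simp; ring
        have hN : (0:ℝ) ≤ (a-2)*(θ-lam)^2 + 2*(a-1)*(2*lam-z)*(θ-lam) + (a-1)*(z-2*lam)^2 := by
          nlinarith [mul_nonneg ha2.le (sq_nonneg (θ-lam)),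
            mul_nonneg (mul_nonneg ha1.le (by linarith : (0:ℝ) ≤ 2*lam - z)) (by linarith : (0:ℝ) ≤ θ - lam),
            mul_nonneg ha1.le (sq_nonneg (z-2*lam))]
        have hDiv := div_nonneg hN (by positivity : (0:ℝ) ≤ 2*(a-1))
        linarith
      · intro h
        nlinarith [sq_nonneg (z-θ), mul_nonneg hlam.le (by linarith : (0:ℝ) ≤ 2*lam - z),
          mul_pos ha2 (mul_pos hlam hlam)]
    · rcases le_or_gt z (a*lam) with hz3 | hz3
      · -- T = ((a-1)z - a lam)/(a-2)
        set T := ((a-1)*z - a*lam)/(a-2) with hTdef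
        have hT : scadThreshold a lam z = T := by
          unfold scadThreshold
          rw [habs, if_neg (by linarith), if_pos hz3, Real.sign_of_pos (by linarith)]
          ring_nf
          rw [hTdef]; ring
        have hTl : lam < T := by
          rw [hTdef, lt_div_iff₀ ha2]; nlinarith
        have hTu : T ≤ a*lam := by
          rw [hTdef, div_le_iff₀ ha2]; nlinarith
        rw [hT]
        have hp : scadPenalty a lam T = -(T^2 - 2*a*lam*T + lam^2)/(2*(a-1)) := by
          unfold scadPenalty; rw [if_neg (not_le.2 hTl), if_pos hTu]
        have hfT : 1/2*(z - T)^2 + scadPenalty a lam T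
            = (a+1)*lam^2/2 - (a*lam - z)^2/(2*(a-2)) := by
          rw [hp, hTdef]; field_simp; ring
        rw [hfT]
        apply pen_ge a lam z θ _ hθ
        · intro h
          have heq : 1/2*(z-θ)^2 + lam*θ
              = ((a+1)*lam^2/2 - (a*lam - z)^2/(2*(a-2)))
                + ((a-2)*(lam-θ)*(2*z-θ-3*lam) + (a-1)*(z-2*lam)^2)/(2*(a-2)) := by
            field_simp; ring
          have hN : (0:ℝ) ≤ (a-2)*(lam-θ)*(2*z-θ-3*lam) + (a-1)*(z-2*lam)^2 := by
            nlinarith [mul_nonneg (mul_nonneg ha2.le (by linarith : (0:ℝ) ≤ lam - θ)) (by linarith : (0:ℝ) ≤ 2*z-θ-3*lam),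
              mul_nonneg ha1.le (sq_nonneg (z-2*lam))]
          have hDiv := div_nonneg hN (by positivity : (0:ℝ) ≤ 2*(a-2))
          linarith
        · intro h h'
          have heq : 1/2*(z-θ)^2 + -(θ^2 - 2*a*lam*θ + lam^2)/(2*(a-1))
              = ((a+1)*lam^2/2 - (a*lam - z)^2/(2*(a-2)))
                + ((a-2)*θ - (a-1)*z + a*lam)^2/(2*(a-1)*(a-2)) := by
            field_simp; ring
          have hDiv := div_nonneg (sq_nonneg ((a-2)*θ - (a-1)*z + a*lam)) (by positivity : (0:ℝ) ≤ 2*(a-1)*(a-2))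
          linarith
        · intro h
          have heq : 1/2*(z-θ)^2 + (a+1)*lam^2/2
              = ((a+1)*lam^2/2 - (a*lam - z)^2/(2*(a-2)))
                + ((a-2)*(z-θ)^2 + (a*lam - z)^2)/(2*(a-2)) := by
            field_simp; ring
          have hN : (0:ℝ) ≤ (a-2)*(z-θ)^2 + (a*lam - z)^2 := by
            nlinarith [mul_nonneg ha2.le (sq_nonneg (z-θ)), sq_nonneg (a*lam - z)]
          have hDiv := div_nonneg hN (by positivity : (0:ℝ) ≤ 2*(a-2))
          linarith
      · -- T = z
        have hT : scadThreshold a lam z = z := by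
          unfold scadThreshold
          rw [habs, if_neg (by linarith), if_neg (by linarith)]
        rw [hT]
        have hp : scadPenalty a lam z = (a+1)*lam^2/2 := by
          unfold scadPenalty
          rw [if_neg (by nlinarith), if_neg (by linarith)]
        rw [hp]
        apply pen_ge a lam z θ _ hθ
        · intro h
          nlinarith [mul_nonneg (by linarith : (0:ℝ) ≤ lam - θ) (by linarith : (0:ℝ) ≤ 2*z-θ-3*lam),
            mul_nonneg (by linarith : (0:ℝ) ≤ z - a*lam) (by nlinarith [mul_pos ha2 hlam] : (0:ℝ) ≤ z + (a-2)*lam),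
            mul_nonneg (mul_nonneg ha1.le ha2.le) (sq_nonneg lam)]
        · intro h h'
          have heq : 1/2*(z-θ)^2 + -(θ^2 - 2*a*lam*θ + lam^2)/(2*(a-1))
              = 1/2*(z-z)^2 + (a+1)*lam^2/2
                + ((a-2)*(θ-a*lam)^2 + 2*(a-1)*(z-a*lam)*(a*lam-θ) + (a-1)*(z-a*lam)^2)/(2*(a-1)) := by
            field_simp; ring
          have hN : (0:ℝ) ≤ (a-2)*(θ-a*lam)^2 + 2*(a-1)*(z-a*lam)*(a*lam-θ) + (a-1)*(z-a*lam)^2 := by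
            nlinarith [mul_nonneg ha2.le (sq_nonneg (θ-a*lam)),
              mul_nonneg (mul_nonneg ha1.le (by linarith : (0:ℝ) ≤ z - a*lam)) (by linarith : (0:ℝ) ≤ a*lam - θ),
              mul_nonneg ha1.le (sq_nonneg (z-a*lam))]
          have hDiv := div_nonneg hN (by positivity : (0:ℝ) ≤ 2*(a-1))
          linarith
        · intro h
          nlinarith [sq_nonneg (z-θ)]

lemma thr_nonneg (a lam z : ℝ) (ha : 2 < a) (hlam : 0 < lam) (hz : 0 ≤ z) :
    0 ≤ scadThreshold a lam z := by
  have ha2 : (0:ℝ) < a - 2 := by linarith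
  unfold scadThreshold
  rw [abs_of_nonneg hz]
  split_ifs with h1 h2
  · rcases eq_or_lt_of_le hz with h | h
    · simp [← h]
    · exact mul_nonneg (by rw [Real.sign_of_pos h]; norm_num) (le_max_right _ _)
  · rw [Real.sign_of_pos (by nlinarith : (0:ℝ) < z)]
    apply div_nonneg _ ha2.le
    nlinarith [not_le.1 h1]
  · exact hz

lemma thr_neg (a lam z : ℝ) : scadThreshold a lam (-z) = - scadThreshold a lam z := by
  unfold scadThreshold
  rw [abs_neg, Real.sign_neg]
  split_ifs <;> ring


/-- The SCAD thresholding rule `θ̂(z)` minimizes `θ ↦ (1/2)(z - θ)² + p_λ(|θ|)` over `ℝ`,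
where `p_λ` is the SCAD penalty with parameters `a > 2` and `λ > 0`. -/
theorem scad_threshold_minimizes (a lam z : ℝ) (ha : 2 < a) (hlam : 0 < lam) :
    ∀ θ : ℝ,
      (1 / 2) * (z - scadThreshold a lam z) ^ 2 + scadPenalty a lam |scadThreshold a lam z| ≤
        (1 / 2) * (z - θ) ^ 2 + scadPenalty a lam |θ| := by
  intro θ
  rcases le_or_gt 0 z with hz | hz
  · have hT0 := thr_nonneg a lam z ha hlam hz
    rw [abs_of_nonneg hT0]
    have h1 := key a lam z ha hlam hz |θ| (abs_nonneg θ)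
    have h2 : (z - |θ|)^2 ≤ (z - θ)^2 := by
      nlinarith [mul_nonneg hz (sub_nonneg.2 (le_abs_self θ)), sq_abs θ]
    linarith
  · have hz' : (0:ℝ) ≤ -z := by linarith
    have hT0 := thr_nonneg a lam (-z) ha hlam hz'
    have hsym : scadThreshold a lam z = - scadThreshold a lam (-z) := by
      have := thr_neg a lam (-z); rwa [neg_neg] at this
    rw [hsym, abs_neg, abs_of_nonneg hT0]
    have h1 := key a lam (-z) ha hlam hz' |θ| (abs_nonneg θ)
    have h2 : (-z - |θ|)^2 ≤ (z - θ)^2 := by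
      nlinarith [mul_nonneg hz' (by linarith [neg_abs_le θ] : (0:ℝ) ≤ θ + |θ|), sq_abs θ]
    have h3 : (z - -scadThreshold a lam (-z))^2 = (-z - scadThreshold a lam (-z))^2 := by ring
    rw [h3]
    linarith
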